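/- Adequacy of the calculus ME_P for three-valued minimally inconsistent entailment: for finite P-theories Γ and Δ, Γ ⊨ᵐ_P Δ holds if and only if the ME_P-sequent ∅;Γ,∅̄⇒Δ;Var(Γ∪Δ) is provable in ME_P, where Var(Γ∪Δ) is the set of all atoms occurring in formulas of Γ or Δ. -/
import Mathlib


/-- Truth values of the three-valued logic P: f < b < t. -/
inductive V3 : Type
  | f | b | t
deriving DecidableEq, Repr

namespace V3

/-- Negation: t, b, f ↦ f, b, t. -/
def negv : V3 → V3
  | .f => .t
  | .b => .b
  | .t => .f

/-- Conjunction: minimum with respect to f < b < t. -/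
def conjv : V3 → V3 → V3
  | .f, _ => .f
  | _, .f => .f
  | .b, _ => .b
  | _, .b => .b
  | .t, .t => .t

/-- Implication: `x ⊃ y` is `y` if `x` is designated (b or t), and `t` otherwise. -/
def impv : V3 → V3 → V3
  | .f, _ => .t
  | _, y => y

end V3

/-- Formulas of the three-valued logic P, with atoms indexed by ℕ, the constant
F, negation, conjunction, and implication. -/
inductive PForm : Type
  | atom : ℕ → PForm
  | fls : PForm
  | neg : PForm → PForm
  | conj : PForm → PForm → PForm
  | imp : PForm → PForm → PForm
deriving DecidableEq

namespace PForm

/-- The valuation of P extending an interpretation `I : ℕ → V3`. -/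
def val (I : ℕ → V3) : PForm → V3
  | atom p => I p
  | fls => .f
  | neg φ => (φ.val I).negv
  | conj φ ψ => (φ.val I).conjv (ψ.val I)
  | imp φ ψ => (φ.val I).impv (ψ.val I)

/-- `I` is a P-model of `φ`: `v_I(φ)` is designated, i.e. b or t. -/
def IsModel (I : ℕ → V3) (φ : PForm) : Prop := φ.val I = .b ∨ φ.val I = .t

/-- `I` is a P-model of the theory `Γ`. -/
def IsModelSet (I : ℕ → V3) (Γ : Set PForm) : Prop := ∀ φ ∈ Γ, IsModel I φ

end PForm

/-- A P-sequent `Γ₁ | Γ₂ | Γ₃` is true under `I` if some formula of `Γ₁` takes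
value f, or some formula of `Γ₂` takes value b, or some formula of `Γ₃` takes
value t under `I`. -/
def PSeqTrue (I : ℕ → V3) (Γ₁ Γ₂ Γ₃ : Finset PForm) : Prop :=
  (∃ φ ∈ Γ₁, φ.val I = .f) ∨ (∃ φ ∈ Γ₂, φ.val I = .b) ∨ (∃ φ ∈ Γ₃, φ.val I = .t)

/-- A P-sequent is valid if it is true under every interpretation. -/
def PSeqValid (Γ₁ Γ₂ Γ₃ : Finset PForm) : Prop := ∀ I, PSeqTrue I Γ₁ Γ₂ Γ₃

/-- The sequent calculus `S_P` for the three-valued logic P (components in the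
order f | b | t). -/
inductive SP : Finset PForm → Finset PForm → Finset PForm → Prop
  | ax (Γ Δ Ω : Finset PForm) (φ : PForm) :
      SP (insert φ Γ) (insert φ Δ) (insert φ Ω)
  | axF (Γ Δ Ω : Finset PForm) :
      SP (insert .fls Γ) Δ Ω
  | negF {Γ Δ Ω : Finset PForm} {φ : PForm} :
      SP Γ Δ (insert φ Ω) → SP (insert (.neg φ) Γ) Δ Ω
  | negB {Γ Δ Ω : Finset PForm} {φ : PForm} :
      SP Γ (insert φ Δ) Ω → SP Γ (insert (.neg φ) Δ) Ω
  | negT {Γ Δ Ω : Finset PForm} {φ : PForm} :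
      SP (insert φ Γ) Δ Ω → SP Γ Δ (insert (.neg φ) Ω)
  | conjF {Γ Δ Ω : Finset PForm} {φ ψ : PForm} :
      SP (insert φ (insert ψ Γ)) Δ Ω → SP (insert (.conj φ ψ) Γ) Δ Ω
  | conjB {Γ Δ Ω : Finset PForm} {φ ψ : PForm} :
      SP Γ (insert φ (insert ψ Δ)) Ω → SP Γ (insert φ Δ) (insert φ Ω) →
      SP Γ (insert ψ Δ) (insert ψ Ω) → SP Γ (insert (.conj φ ψ) Δ) Ω
  | conjT {Γ Δ Ω : Finset PForm} {φ ψ : PForm} :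
      SP Γ Δ (insert φ Ω) → SP Γ Δ (insert ψ Ω) → SP Γ Δ (insert (.conj φ ψ) Ω)
  | impF {Γ Δ Ω : Finset PForm} {φ ψ : PForm} :
      SP Γ (insert φ Δ) (insert φ Ω) → SP (insert ψ Γ) Δ Ω →
      SP (insert (.imp φ ψ) Γ) Δ Ω
  | impB {Γ Δ Ω : Finset PForm} {φ ψ : PForm} :
      SP Γ (insert φ Δ) (insert φ Ω) → SP Γ (insert ψ Δ) Ω →
      SP Γ (insert (.imp φ ψ) Δ) Ω
  | impT {Γ Δ Ω : Finset PForm} {φ ψ : PForm} :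
      SP (insert φ Γ) Δ (insert ψ Ω) → SP Γ Δ (insert (.imp φ ψ) Ω)
  | wF {Γ Δ Ω : Finset PForm} (φ : PForm) :
      SP Γ Δ Ω → SP (insert φ Γ) Δ Ω
  | wB {Γ Δ Ω : Finset PForm} (φ : PForm) :
      SP Γ Δ Ω → SP Γ (insert φ Δ) Ω
  | wT {Γ Δ Ω : Finset PForm} (φ : PForm) :
      SP Γ Δ Ω → SP Γ Δ (insert φ Ω)


/-- A P-anti-sequent `Γ₁ ∤ Γ₂ ∤ Γ₃` is refuted by `I` if no formula of `Γ₁`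
takes value f, no formula of `Γ₂` takes value b, and no formula of `Γ₃` takes
value t under `I`. -/
def PAntiRefutedBy (I : ℕ → V3) (Γ₁ Γ₂ Γ₃ : Finset PForm) : Prop :=
  (∀ φ ∈ Γ₁, φ.val I ≠ .f) ∧ (∀ φ ∈ Γ₂, φ.val I ≠ .b) ∧ (∀ φ ∈ Γ₃, φ.val I ≠ .t)

/-- A P-anti-sequent is refutable if some interpretation refutes it. -/
def PAntiRefutable (Γ₁ Γ₂ Γ₃ : Finset PForm) : Prop := ∃ I, PAntiRefutedBy I Γ₁ Γ₂ Γ₃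

/-- A formula that is an atom or the constant F. -/
def PForm.IsBasic : PForm → Prop
  | .atom _ => True
  | .fls => True
  | _ => False

/-- The anti-sequent calculus `R_P` for the three-valued logic P (components in
the order f ∤ b ∤ t). -/
inductive RP : Finset PForm → Finset PForm → Finset PForm → Prop
  | ax (Γ Δ Ω : Finset PForm) :
      (∀ φ ∈ Γ ∪ Δ ∪ Ω, φ.IsBasic) → Γ ∩ Δ ∩ Ω = ∅ → .fls ∉ Γ →
      RP Γ Δ Ω
  | negF {Γ Δ Ω : Finset PForm} {φ : PForm} :
      RP Γ Δ (insert φ Ω) → RP (insert (.neg φ) Γ) Δ Ω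
  | negB {Γ Δ Ω : Finset PForm} {φ : PForm} :
      RP Γ (insert φ Δ) Ω → RP Γ (insert (.neg φ) Δ) Ω
  | negT {Γ Δ Ω : Finset PForm} {φ : PForm} :
      RP (insert φ Γ) Δ Ω → RP Γ Δ (insert (.neg φ) Ω)
  | conjF {Γ Δ Ω : Finset PForm} {φ ψ : PForm} :
      RP (insert φ (insert ψ Γ)) Δ Ω → RP (insert (.conj φ ψ) Γ) Δ Ω
  | conjB1 {Γ Δ Ω : Finset PForm} {φ ψ : PForm} :
      RP Γ (insert φ (insert ψ Δ)) Ω → RP Γ (insert (.conj φ ψ) Δ) Ω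
  | conjB2 {Γ Δ Ω : Finset PForm} {φ ψ : PForm} :
      RP Γ (insert φ Δ) (insert φ Ω) → RP Γ (insert (.conj φ ψ) Δ) Ω
  | conjB3 {Γ Δ Ω : Finset PForm} {φ ψ : PForm} :
      RP Γ (insert ψ Δ) (insert ψ Ω) → RP Γ (insert (.conj φ ψ) Δ) Ω
  | conjT1 {Γ Δ Ω : Finset PForm} {φ ψ : PForm} :
      RP Γ Δ (insert φ Ω) → RP Γ Δ (insert (.conj φ ψ) Ω)
  | conjT2 {Γ Δ Ω : Finset PForm} {φ ψ : PForm} :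
      RP Γ Δ (insert ψ Ω) → RP Γ Δ (insert (.conj φ ψ) Ω)
  | impF1 {Γ Δ Ω : Finset PForm} {φ ψ : PForm} :
      RP Γ (insert φ Δ) (insert φ Ω) → RP (insert (.imp φ ψ) Γ) Δ Ω
  | impF2 {Γ Δ Ω : Finset PForm} {φ ψ : PForm} :
      RP (insert ψ Γ) Δ Ω → RP (insert (.imp φ ψ) Γ) Δ Ω
  | impB1 {Γ Δ Ω : Finset PForm} {φ ψ : PForm} :
      RP Γ (insert φ Δ) (insert φ Ω) → RP Γ (insert (.imp φ ψ) Δ) Ω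
  | impB2 {Γ Δ Ω : Finset PForm} {φ ψ : PForm} :
      RP Γ (insert ψ Δ) Ω → RP Γ (insert (.imp φ ψ) Δ) Ω
  | impT {Γ Δ Ω : Finset PForm} {φ ψ : PForm} :
      RP (insert φ Γ) Δ (insert ψ Ω) → RP Γ Δ (insert (.imp φ ψ) Ω)


/-- The set of atoms occurring in a P-formula. -/
def PForm.pvars : PForm → Finset ℕ
  | .atom p => {p}
  | .fls => ∅
  | .neg φ => φ.pvars
  | .conj φ ψ => φ.pvars ∪ ψ.pvars
  | .imp φ ψ => φ.pvars ∪ ψ.pvars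

/-- `I` is a minimally inconsistent P-model of `Γ`: no P-model `J` of `Γ`
makes a strictly smaller set of atoms take the value b. -/
def PMinIncModel (I : ℕ → V3) (Γ : Set PForm) : Prop :=
  PForm.IsModelSet I Γ ∧
    ¬ ∃ J : ℕ → V3, PForm.IsModelSet J Γ ∧ {p : ℕ | J p = .b} ⊂ {p : ℕ | I p = .b}

/-- `Γ ⊨ᵐ_P Δ`: every minimally inconsistent P-model of `Γ` is a P-model of
some member of `Δ`. -/
def PMinEntails (Γ Δ : Set PForm) : Prop :=
  ∀ I, PMinIncModel I Γ → ∃ δ ∈ Δ, PForm.IsModel I δ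

/-- The calculus `ME_P` on sequents `Σ;Γ,Π̄⇒Δ;Θ` (arguments in the order
`Σ Γ Π Δ Θ`, where `Π` records the atoms required not to take the value b),
with rules (m1'), (m2') and (m3). -/
inductive MEP : Finset ℕ → Finset PForm → Finset ℕ → Finset PForm → Finset ℕ → Prop
  | m1 {S Pi Θ : Finset ℕ} {Γ Δ : Finset PForm} {q : ℕ} :
      RP Γ ((insert q (Θ ∪ Pi)).image PForm.atom) ∅ →
      MEP (insert q S) Γ Pi Δ Θ
  | m2 {S Pi Θ : Finset ℕ} {Γ Δ : Finset PForm} :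
      SP (S.image PForm.atom ∪ Γ) (Δ ∪ Pi.image PForm.atom) (Δ ∪ S.image PForm.atom) →
      MEP S Γ Pi Δ Θ
  | m3 {S Pi Θ : Finset ℕ} {Γ Δ : Finset PForm} {q : ℕ} :
      MEP (insert q S) Γ Pi Δ Θ →
      MEP S Γ (insert q Pi) Δ Θ →
      MEP S Γ Pi Δ (insert q Θ)


section Aux

open PForm

lemma V3.cases3 (x : V3) : x = .f ∨ x = .b ∨ x = .t := by cases x <;> simp

lemma isModel_iff {I : ℕ → V3} {φ : PForm} : IsModel I φ ↔ φ.val I ≠ .f := by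
  unfold PForm.IsModel; rcases (φ.val I).cases3 with h|h|h <;> simp [h]

/-- val depends only on pvars. -/
lemma val_congr {I J : ℕ → V3} : ∀ φ : PForm, (∀ p ∈ φ.pvars, I p = J p) →
    φ.val I = φ.val J := by
  intro φ
  induction φ with
  | atom p => intro h; exact h p (by simp [pvars])
  | fls => intro _; rfl
  | neg φ ih => intro h; simp only [val]; rw [ih h]
  | conj φ ψ ih1 ih2 =>
      intro h; simp only [val]
      rw [ih1 (fun p hp => h p (by simp [pvars, hp])),
          ih2 (fun p hp => h p (by simp [pvars, hp]))]
  | imp φ ψ ih1 ih2 =>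
      intro h; simp only [val]
      rw [ih1 (fun p hp => h p (by simp [pvars, hp])),
          ih2 (fun p hp => h p (by simp [pvars, hp]))]

lemma PSeqTrue_insert₁ {I Γ₁ Γ₂ Γ₃} {φ : PForm} :
    PSeqTrue I (insert φ Γ₁) Γ₂ Γ₃ ↔ φ.val I = .f ∨ PSeqTrue I Γ₁ Γ₂ Γ₃ := by
  simp only [PSeqTrue, Finset.exists_mem_insert]; itauto

lemma PSeqTrue_insert₂ {I Γ₁ Γ₂ Γ₃} {φ : PForm} :
    PSeqTrue I Γ₁ (insert φ Γ₂) Γ₃ ↔ φ.val I = .b ∨ PSeqTrue I Γ₁ Γ₂ Γ₃ := by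
  simp only [PSeqTrue, Finset.exists_mem_insert]; itauto

lemma PSeqTrue_insert₃ {I Γ₁ Γ₂ Γ₃} {φ : PForm} :
    PSeqTrue I Γ₁ Γ₂ (insert φ Γ₃) ↔ φ.val I = .t ∨ PSeqTrue I Γ₁ Γ₂ Γ₃ := by
  simp only [PSeqTrue, Finset.exists_mem_insert]; itauto

lemma SP_sound {Γ₁ Γ₂ Γ₃ : Finset PForm} (h : SP Γ₁ Γ₂ Γ₃) : PSeqValid Γ₁ Γ₂ Γ₃ := by
  induction h with
  | ax Γ Δ Ω φ =>
      intro I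
      rcases (φ.val I).cases3 with h|h|h
      · exact Or.inl ⟨φ, by simp, h⟩
      · exact Or.inr (Or.inl ⟨φ, by simp, h⟩)
      · exact Or.inr (Or.inr ⟨φ, by simp, h⟩)
  | axF Γ Δ Ω => intro I; exact Or.inl ⟨.fls, by simp, rfl⟩
  | @negF Γ Δ Ω φ _ ih =>
      intro I
      have h1 := PSeqTrue_insert₃.mp (ih I)
      rw [PSeqTrue_insert₁]
      rcases hφ : φ.val I <;> simp_all [val, V3.negv]
  | @negB Γ Δ Ω φ _ ih =>
      intro I
      have h1 := PSeqTrue_insert₂.mp (ih I)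
      rw [PSeqTrue_insert₂]
      rcases hφ : φ.val I <;> simp_all [val, V3.negv]
  | @negT Γ Δ Ω φ _ ih =>
      intro I
      have h1 := PSeqTrue_insert₁.mp (ih I)
      rw [PSeqTrue_insert₃]
      rcases hφ : φ.val I <;> simp_all [val, V3.negv]
  | @conjF Γ Δ Ω φ ψ _ ih =>
      intro I
      have h1 := ih I
      rw [PSeqTrue_insert₁, PSeqTrue_insert₁] at h1
      rw [PSeqTrue_insert₁]
      rcases hφ : φ.val I <;> rcases hψ : ψ.val I <;> simp_all [val, V3.conjv]
  | @conjB Γ Δ Ω φ ψ _ _ _ ih1 ih2 ih3 =>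
      intro I
      have h1 := ih1 I; have h2 := ih2 I; have h3 := ih3 I
      rw [PSeqTrue_insert₂, PSeqTrue_insert₂] at h1
      rw [PSeqTrue_insert₂, PSeqTrue_insert₃] at h2
      rw [PSeqTrue_insert₂, PSeqTrue_insert₃] at h3
      rw [PSeqTrue_insert₂]
      rcases hφ : φ.val I <;> rcases hψ : ψ.val I <;> simp_all [val, V3.conjv]
  | @conjT Γ Δ Ω φ ψ _ _ ih1 ih2 =>
      intro I
      have h1 := ih1 I; have h2 := ih2 I
      rw [PSeqTrue_insert₃] at h1 h2
      rw [PSeqTrue_insert₃]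
      rcases hφ : φ.val I <;> rcases hψ : ψ.val I <;> simp_all [val, V3.conjv]
  | @impF Γ Δ Ω φ ψ _ _ ih1 ih2 =>
      intro I
      have h1 := ih1 I; have h2 := ih2 I
      rw [PSeqTrue_insert₂, PSeqTrue_insert₃] at h1
      rw [PSeqTrue_insert₁] at h2
      rw [PSeqTrue_insert₁]
      rcases hφ : φ.val I <;> rcases hψ : ψ.val I <;> simp_all [val, V3.impv]
  | @impB Γ Δ Ω φ ψ _ _ ih1 ih2 =>
      intro I
      have h1 := ih1 I; have h2 := ih2 I
      rw [PSeqTrue_insert₂, PSeqTrue_insert₃] at h1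
      rw [PSeqTrue_insert₂] at h2
      rw [PSeqTrue_insert₂]
      rcases hφ : φ.val I <;> rcases hψ : ψ.val I <;> simp_all [val, V3.impv]
  | @impT Γ Δ Ω φ ψ _ ih =>
      intro I
      have h1 := ih I
      rw [PSeqTrue_insert₁, PSeqTrue_insert₃] at h1
      rw [PSeqTrue_insert₃]
      rcases hφ : φ.val I <;> rcases hψ : ψ.val I <;> simp_all [val, V3.impv]
  | wF φ _ ih => intro I; exact PSeqTrue_insert₁.mpr (Or.inr (ih I))
  | wB φ _ ih => intro I; exact PSeqTrue_insert₂.mpr (Or.inr (ih I))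
  | wT φ _ ih => intro I; exact PSeqTrue_insert₃.mpr (Or.inr (ih I))

lemma PAnti_insert₁ {I Γ₁ Γ₂ Γ₃} {φ : PForm} :
    PAntiRefutedBy I (insert φ Γ₁) Γ₂ Γ₃ ↔ φ.val I ≠ .f ∧ PAntiRefutedBy I Γ₁ Γ₂ Γ₃ := by
  simp only [PAntiRefutedBy, Finset.forall_mem_insert]; itauto

lemma PAnti_insert₂ {I Γ₁ Γ₂ Γ₃} {φ : PForm} :
    PAntiRefutedBy I Γ₁ (insert φ Γ₂) Γ₃ ↔ φ.val I ≠ .b ∧ PAntiRefutedBy I Γ₁ Γ₂ Γ₃ := by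
  simp only [PAntiRefutedBy, Finset.forall_mem_insert]; itauto

lemma PAnti_insert₃ {I Γ₁ Γ₂ Γ₃} {φ : PForm} :
    PAntiRefutedBy I Γ₁ Γ₂ (insert φ Γ₃) ↔ φ.val I ≠ .t ∧ PAntiRefutedBy I Γ₁ Γ₂ Γ₃ := by
  simp only [PAntiRefutedBy, Finset.forall_mem_insert]; itauto

lemma RP_sound {Γ₁ Γ₂ Γ₃ : Finset PForm} (h : RP Γ₁ Γ₂ Γ₃) : PAntiRefutable Γ₁ Γ₂ Γ₃ := by
  classical
  induction h with
  | ax Γ Δ Ω hbasic hinter hF =>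
      refine ⟨fun p => if PForm.atom p ∈ Ω then (if PForm.atom p ∈ Γ then .b else .f)
        else .t, ?_, ?_, ?_⟩
      · intro φ hφ
        have hb := hbasic φ (by simp only [Finset.mem_union]; tauto)
        cases φ with
        | atom p =>
            simp only [val]
            split_ifs with h1 h2 <;> simp_all
        | fls => exact absurd hφ hF
        | neg φ => simp [PForm.IsBasic] at hb
        | conj φ ψ => simp [PForm.IsBasic] at hb
        | imp φ ψ => simp [PForm.IsBasic] at hb
      · intro φ hφ
        have hb := hbasic φ (by simp only [Finset.mem_union]; tauto)
        cases φ with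
        | atom p =>
            simp only [val]
            split_ifs with h1 h2
            · exfalso
              have : PForm.atom p ∈ Γ ∩ Δ ∩ Ω := by
                simp [Finset.mem_inter, h1, h2, hφ]
              rw [hinter] at this; exact absurd this (Finset.notMem_empty _)
            · simp
            · simp
        | fls => simp [val]
        | neg φ => simp [PForm.IsBasic] at hb
        | conj φ ψ => simp [PForm.IsBasic] at hb
        | imp φ ψ => simp [PForm.IsBasic] at hb
      · intro φ hφ
        have hb := hbasic φ (by simp only [Finset.mem_union]; tauto)
        cases φ with
        | atom p =>
            simp only [val]
            split_ifs with h1 h2 <;> simp_all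
        | fls => simp [val]
        | neg φ => simp [PForm.IsBasic] at hb
        | conj φ ψ => simp [PForm.IsBasic] at hb
        | imp φ ψ => simp [PForm.IsBasic] at hb
  | @negF Γ Δ Ω φ _ ih =>
      obtain ⟨I, hI⟩ := ih
      refine ⟨I, ?_⟩
      rw [PAnti_insert₃] at hI
      rw [PAnti_insert₁]
      rcases hφ : φ.val I <;> simp_all [val, V3.negv]
  | @negB Γ Δ Ω φ _ ih =>
      obtain ⟨I, hI⟩ := ih
      refine ⟨I, ?_⟩
      rw [PAnti_insert₂] at hI
      rw [PAnti_insert₂]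
      rcases hφ : φ.val I <;> simp_all [val, V3.negv]
  | @negT Γ Δ Ω φ _ ih =>
      obtain ⟨I, hI⟩ := ih
      refine ⟨I, ?_⟩
      rw [PAnti_insert₁] at hI
      rw [PAnti_insert₃]
      rcases hφ : φ.val I <;> simp_all [val, V3.negv]
  | @conjF Γ Δ Ω φ ψ _ ih =>
      obtain ⟨I, hI⟩ := ih
      refine ⟨I, ?_⟩
      rw [PAnti_insert₁, PAnti_insert₁] at hI
      rw [PAnti_insert₁]
      rcases hφ : φ.val I <;> rcases hψ : ψ.val I <;> simp_all [val, V3.conjv]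
  | @conjB1 Γ Δ Ω φ ψ _ ih =>
      obtain ⟨I, hI⟩ := ih
      refine ⟨I, ?_⟩
      rw [PAnti_insert₂, PAnti_insert₂] at hI
      rw [PAnti_insert₂]
      rcases hφ : φ.val I <;> rcases hψ : ψ.val I <;> simp_all [val, V3.conjv]
  | @conjB2 Γ Δ Ω φ ψ _ ih =>
      obtain ⟨I, hI⟩ := ih
      refine ⟨I, ?_⟩
      rw [PAnti_insert₂, PAnti_insert₃] at hI
      rw [PAnti_insert₂]
      rcases hφ : φ.val I <;> rcases hψ : ψ.val I <;> simp_all [val, V3.conjv]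
  | @conjB3 Γ Δ Ω φ ψ _ ih =>
      obtain ⟨I, hI⟩ := ih
      refine ⟨I, ?_⟩
      rw [PAnti_insert₂, PAnti_insert₃] at hI
      rw [PAnti_insert₂]
      rcases hφ : φ.val I <;> rcases hψ : ψ.val I <;> simp_all [val, V3.conjv]
  | @conjT1 Γ Δ Ω φ ψ _ ih =>
      obtain ⟨I, hI⟩ := ih
      refine ⟨I, ?_⟩
      rw [PAnti_insert₃] at hI
      rw [PAnti_insert₃]
      rcases hφ : φ.val I <;> rcases hψ : ψ.val I <;> simp_all [val, V3.conjv]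
  | @conjT2 Γ Δ Ω φ ψ _ ih =>
      obtain ⟨I, hI⟩ := ih
      refine ⟨I, ?_⟩
      rw [PAnti_insert₃] at hI
      rw [PAnti_insert₃]
      rcases hφ : φ.val I <;> rcases hψ : ψ.val I <;> simp_all [val, V3.conjv]
  | @impF1 Γ Δ Ω φ ψ _ ih =>
      obtain ⟨I, hI⟩ := ih
      refine ⟨I, ?_⟩
      rw [PAnti_insert₂, PAnti_insert₃] at hI
      rw [PAnti_insert₁]
      rcases hφ : φ.val I <;> rcases hψ : ψ.val I <;> simp_all [val, V3.impv]
  | @impF2 Γ Δ Ω φ ψ _ ih =>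
      obtain ⟨I, hI⟩ := ih
      refine ⟨I, ?_⟩
      rw [PAnti_insert₁] at hI
      rw [PAnti_insert₁]
      rcases hφ : φ.val I <;> rcases hψ : ψ.val I <;> simp_all [val, V3.impv]
  | @impB1 Γ Δ Ω φ ψ _ ih =>
      obtain ⟨I, hI⟩ := ih
      refine ⟨I, ?_⟩
      rw [PAnti_insert₂, PAnti_insert₃] at hI
      rw [PAnti_insert₂]
      rcases hφ : φ.val I <;> rcases hψ : ψ.val I <;> simp_all [val, V3.impv]
  | @impB2 Γ Δ Ω φ ψ _ ih =>
      obtain ⟨I, hI⟩ := ih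
      refine ⟨I, ?_⟩
      rw [PAnti_insert₂] at hI
      rw [PAnti_insert₂]
      rcases hφ : φ.val I <;> rcases hψ : ψ.val I <;> simp_all [val, V3.impv]
  | @impT Γ Δ Ω φ ψ _ ih =>
      obtain ⟨I, hI⟩ := ih
      refine ⟨I, ?_⟩
      rw [PAnti_insert₁, PAnti_insert₃] at hI
      rw [PAnti_insert₃]
      rcases hφ : φ.val I <;> rcases hψ : ψ.val I <;> simp_all [val, V3.impv]

/-- Weight of a formula, used as termination measure. -/
def PForm.wt : PForm → ℕ
  | .atom _ => 1
  | .fls => 1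
  | .neg φ => φ.wt + 1
  | .conj φ ψ => 2 * (φ.wt + ψ.wt) + 1
  | .imp φ ψ => 2 * (φ.wt + ψ.wt) + 1

/-- Total weight of a finite set of formulas. -/
def fw (X : Finset PForm) : ℕ := ∑ φ ∈ X, φ.wt

lemma fw_insert_le (φ : PForm) (X : Finset PForm) : fw (insert φ X) ≤ φ.wt + fw X := by
  classical
  by_cases h : φ ∈ X
  · rw [Finset.insert_eq_self.mpr h]; exact Nat.le_add_left _ _
  · rw [fw, Finset.sum_insert h]; exact le_rfl

lemma fw_erase {φ : PForm} {X : Finset PForm} (h : φ ∈ X) :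
    fw (X.erase φ) + φ.wt = fw X := Finset.sum_erase_add X _ h

lemma SP_complete {Γ₁ Γ₂ Γ₃ : Finset PForm} (hv : PSeqValid Γ₁ Γ₂ Γ₃) : SP Γ₁ Γ₂ Γ₃ := by
  classical
  suffices H : ∀ n Γ₁ Γ₂ Γ₃, fw Γ₁ + fw Γ₂ + fw Γ₃ ≤ n → PSeqValid Γ₁ Γ₂ Γ₃ →
      SP Γ₁ Γ₂ Γ₃ from H _ _ _ _ le_rfl hv
  intro n
  induction n using Nat.strong_induction_on with
  | _ n ih =>
  intro Γ₁ Γ₂ Γ₃ hn hval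
  by_cases hc : ∃ χ ∈ Γ₁ ∪ Γ₂ ∪ Γ₃, ¬ χ.IsBasic
  · obtain ⟨χ, hmem, hnb⟩ := hc
    rw [Finset.mem_union, Finset.mem_union] at hmem
    rcases hmem with (hm | hm) | hm
    · -- non-basic formula in the f-component
      cases χ with
      | atom p => simp [PForm.IsBasic] at hnb
      | fls => simp [PForm.IsBasic] at hnb
      | neg φ =>
          have hΓ : Γ₁ = insert (PForm.neg φ) (Γ₁.erase (PForm.neg φ)) :=
            (Finset.insert_erase hm).symm
          rw [hΓ] at hval ⊢; clear hΓ
          apply SP.negF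
          refine ih _ ?_ _ _ _ le_rfl ?_
          · have e1 := fw_insert_le φ Γ₃
            have e3 := fw_erase hm
            have ew : (PForm.neg φ).wt = φ.wt + 1 := rfl
            omega
          · intro I
            have h := hval I
            rw [PSeqTrue_insert₁] at h
            rw [PSeqTrue_insert₃]
            rcases hφ : φ.val I <;> simp_all [val, V3.negv]
      | conj φ ψ =>
          have hΓ : Γ₁ = insert (PForm.conj φ ψ) (Γ₁.erase (PForm.conj φ ψ)) :=
            (Finset.insert_erase hm).symm
          rw [hΓ] at hval ⊢; clear hΓ
          apply SP.conjF
          refine ih _ ?_ _ _ _ le_rfl ?_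
          · have e1 := fw_insert_le φ (insert ψ (Γ₁.erase (PForm.conj φ ψ)))
            have e2 := fw_insert_le ψ (Γ₁.erase (PForm.conj φ ψ))
            have e3 := fw_erase hm
            have ew : (PForm.conj φ ψ).wt = 2 * (φ.wt + ψ.wt) + 1 := rfl
            omega
          · intro I
            have h := hval I
            rw [PSeqTrue_insert₁] at h
            rw [PSeqTrue_insert₁, PSeqTrue_insert₁]
            rcases hφ : φ.val I <;> rcases hψ : ψ.val I <;> simp_all [val, V3.conjv]
      | imp φ ψ =>
          have hΓ : Γ₁ = insert (PForm.imp φ ψ) (Γ₁.erase (PForm.imp φ ψ)) :=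
            (Finset.insert_erase hm).symm
          rw [hΓ] at hval ⊢; clear hΓ
          apply SP.impF
          · refine ih _ ?_ _ _ _ le_rfl ?_
            · have e1 := fw_insert_le φ Γ₂
              have e2 := fw_insert_le φ Γ₃
              have e3 := fw_erase hm
              have ew : (PForm.imp φ ψ).wt = 2 * (φ.wt + ψ.wt) + 1 := rfl
              omega
            · intro I
              have h := hval I
              rw [PSeqTrue_insert₁] at h
              rw [PSeqTrue_insert₂, PSeqTrue_insert₃]
              rcases hφ : φ.val I <;> rcases hψ : ψ.val I <;> simp_all [val, V3.impv]
          · refine ih _ ?_ _ _ _ le_rfl ?_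
            · have e1 := fw_insert_le ψ (Γ₁.erase (PForm.imp φ ψ))
              have e3 := fw_erase hm
              have ew : (PForm.imp φ ψ).wt = 2 * (φ.wt + ψ.wt) + 1 := rfl
              omega
            · intro I
              have h := hval I
              rw [PSeqTrue_insert₁] at h
              rw [PSeqTrue_insert₁]
              rcases hφ : φ.val I <;> rcases hψ : ψ.val I <;> simp_all [val, V3.impv]
    · -- non-basic formula in the b-component
      cases χ with
      | atom p => simp [PForm.IsBasic] at hnb
      | fls => simp [PForm.IsBasic] at hnb
      | neg φ =>
          have hΓ : Γ₂ = insert (PForm.neg φ) (Γ₂.erase (PForm.neg φ)) :=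
            (Finset.insert_erase hm).symm
          rw [hΓ] at hval ⊢; clear hΓ
          apply SP.negB
          refine ih _ ?_ _ _ _ le_rfl ?_
          · have e1 := fw_insert_le φ (Γ₂.erase (PForm.neg φ))
            have e3 := fw_erase hm
            have ew : (PForm.neg φ).wt = φ.wt + 1 := rfl
            omega
          · intro I
            have h := hval I
            rw [PSeqTrue_insert₂] at h
            rw [PSeqTrue_insert₂]
            rcases hφ : φ.val I <;> simp_all [val, V3.negv]
      | conj φ ψ =>
          have hΓ : Γ₂ = insert (PForm.conj φ ψ) (Γ₂.erase (PForm.conj φ ψ)) :=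
            (Finset.insert_erase hm).symm
          rw [hΓ] at hval ⊢; clear hΓ
          apply SP.conjB
          · refine ih _ ?_ _ _ _ le_rfl ?_
            · have e1 := fw_insert_le φ (insert ψ (Γ₂.erase (PForm.conj φ ψ)))
              have e2 := fw_insert_le ψ (Γ₂.erase (PForm.conj φ ψ))
              have e3 := fw_erase hm
              have ew : (PForm.conj φ ψ).wt = 2 * (φ.wt + ψ.wt) + 1 := rfl
              omega
            · intro I
              have h := hval I
              rw [PSeqTrue_insert₂] at h
              rw [PSeqTrue_insert₂, PSeqTrue_insert₂]
              rcases hφ : φ.val I <;> rcases hψ : ψ.val I <;> simp_all [val, V3.conjv]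
          · refine ih _ ?_ _ _ _ le_rfl ?_
            · have e1 := fw_insert_le φ (Γ₂.erase (PForm.conj φ ψ))
              have e2 := fw_insert_le φ Γ₃
              have e3 := fw_erase hm
              have ew : (PForm.conj φ ψ).wt = 2 * (φ.wt + ψ.wt) + 1 := rfl
              omega
            · intro I
              have h := hval I
              rw [PSeqTrue_insert₂] at h
              rw [PSeqTrue_insert₂, PSeqTrue_insert₃]
              rcases hφ : φ.val I <;> rcases hψ : ψ.val I <;> simp_all [val, V3.conjv]
          · refine ih _ ?_ _ _ _ le_rfl ?_
            · have e1 := fw_insert_le ψ (Γ₂.erase (PForm.conj φ ψ))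
              have e2 := fw_insert_le ψ Γ₃
              have e3 := fw_erase hm
              have ew : (PForm.conj φ ψ).wt = 2 * (φ.wt + ψ.wt) + 1 := rfl
              omega
            · intro I
              have h := hval I
              rw [PSeqTrue_insert₂] at h
              rw [PSeqTrue_insert₂, PSeqTrue_insert₃]
              rcases hφ : φ.val I <;> rcases hψ : ψ.val I <;> simp_all [val, V3.conjv]
      | imp φ ψ =>
          have hΓ : Γ₂ = insert (PForm.imp φ ψ) (Γ₂.erase (PForm.imp φ ψ)) :=
            (Finset.insert_erase hm).symm
          rw [hΓ] at hval ⊢; clear hΓ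
          apply SP.impB
          · refine ih _ ?_ _ _ _ le_rfl ?_
            · have e1 := fw_insert_le φ (Γ₂.erase (PForm.imp φ ψ))
              have e2 := fw_insert_le φ Γ₃
              have e3 := fw_erase hm
              have ew : (PForm.imp φ ψ).wt = 2 * (φ.wt + ψ.wt) + 1 := rfl
              omega
            · intro I
              have h := hval I
              rw [PSeqTrue_insert₂] at h
              rw [PSeqTrue_insert₂, PSeqTrue_insert₃]
              rcases hφ : φ.val I <;> rcases hψ : ψ.val I <;> simp_all [val, V3.impv]
          · refine ih _ ?_ _ _ _ le_rfl ?_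
            · have e1 := fw_insert_le ψ (Γ₂.erase (PForm.imp φ ψ))
              have e3 := fw_erase hm
              have ew : (PForm.imp φ ψ).wt = 2 * (φ.wt + ψ.wt) + 1 := rfl
              omega
            · intro I
              have h := hval I
              rw [PSeqTrue_insert₂] at h
              rw [PSeqTrue_insert₂]
              rcases hφ : φ.val I <;> rcases hψ : ψ.val I <;> simp_all [val, V3.impv]
    · -- non-basic formula in the t-component
      cases χ with
      | atom p => simp [PForm.IsBasic] at hnb
      | fls => simp [PForm.IsBasic] at hnb
      | neg φ =>
          have hΓ : Γ₃ = insert (PForm.neg φ) (Γ₃.erase (PForm.neg φ)) :=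
            (Finset.insert_erase hm).symm
          rw [hΓ] at hval ⊢; clear hΓ
          apply SP.negT
          refine ih _ ?_ _ _ _ le_rfl ?_
          · have e1 := fw_insert_le φ Γ₁
            have e3 := fw_erase hm
            have ew : (PForm.neg φ).wt = φ.wt + 1 := rfl
            omega
          · intro I
            have h := hval I
            rw [PSeqTrue_insert₃] at h
            rw [PSeqTrue_insert₁]
            rcases hφ : φ.val I <;> simp_all [val, V3.negv]
      | conj φ ψ =>
          have hΓ : Γ₃ = insert (PForm.conj φ ψ) (Γ₃.erase (PForm.conj φ ψ)) :=
            (Finset.insert_erase hm).symm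
          rw [hΓ] at hval ⊢; clear hΓ
          apply SP.conjT
          · refine ih _ ?_ _ _ _ le_rfl ?_
            · have e1 := fw_insert_le φ (Γ₃.erase (PForm.conj φ ψ))
              have e3 := fw_erase hm
              have ew : (PForm.conj φ ψ).wt = 2 * (φ.wt + ψ.wt) + 1 := rfl
              omega
            · intro I
              have h := hval I
              rw [PSeqTrue_insert₃] at h
              rw [PSeqTrue_insert₃]
              rcases hφ : φ.val I <;> rcases hψ : ψ.val I <;> simp_all [val, V3.conjv]
          · refine ih _ ?_ _ _ _ le_rfl ?_
            · have e1 := fw_insert_le ψ (Γ₃.erase (PForm.conj φ ψ))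
              have e3 := fw_erase hm
              have ew : (PForm.conj φ ψ).wt = 2 * (φ.wt + ψ.wt) + 1 := rfl
              omega
            · intro I
              have h := hval I
              rw [PSeqTrue_insert₃] at h
              rw [PSeqTrue_insert₃]
              rcases hφ : φ.val I <;> rcases hψ : ψ.val I <;> simp_all [val, V3.conjv]
      | imp φ ψ =>
          have hΓ : Γ₃ = insert (PForm.imp φ ψ) (Γ₃.erase (PForm.imp φ ψ)) :=
            (Finset.insert_erase hm).symm
          rw [hΓ] at hval ⊢; clear hΓ
          apply SP.impT
          refine ih _ ?_ _ _ _ le_rfl ?_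
          · have e1 := fw_insert_le φ Γ₁
            have e2 := fw_insert_le ψ (Γ₃.erase (PForm.imp φ ψ))
            have e3 := fw_erase hm
            have ew : (PForm.imp φ ψ).wt = 2 * (φ.wt + ψ.wt) + 1 := rfl
            omega
          · intro I
            have h := hval I
            rw [PSeqTrue_insert₃] at h
            rw [PSeqTrue_insert₁, PSeqTrue_insert₃]
            rcases hφ : φ.val I <;> rcases hψ : ψ.val I <;> simp_all [val, V3.impv]
  · -- all formulas basic
    push_neg at hc
    by_cases hF : PForm.fls ∈ Γ₁
    · have := SP.axF (Γ₁.erase PForm.fls) Γ₂ Γ₃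
      rwa [Finset.insert_erase hF] at this
    · have key : ∃ φ, φ ∈ Γ₁ ∧ φ ∈ Γ₂ ∧ φ ∈ Γ₃ := by
        by_contra hk
        push_neg at hk
        set I : ℕ → V3 := fun p => if PForm.atom p ∈ Γ₁ then
          (if PForm.atom p ∈ Γ₂ then .t else .b) else .f with hIdef
        rcases hval I with ⟨φ, hm, hvv⟩ | ⟨φ, hm, hvv⟩ | ⟨φ, hm, hvv⟩
        · have hb := hc φ (by simp only [Finset.mem_union]; tauto)
          cases φ with
          | atom p =>
              simp only [val, hIdef] at hvv
              split_ifs at hvv with h1 h2 <;> simp_all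
          | fls => exact hF hm
          | neg φ => simp [PForm.IsBasic] at hb
          | conj φ ψ => simp [PForm.IsBasic] at hb
          | imp φ ψ => simp [PForm.IsBasic] at hb
        · have hb := hc φ (by simp only [Finset.mem_union]; tauto)
          cases φ with
          | atom p =>
              simp only [val, hIdef] at hvv
              split_ifs at hvv with h1 h2 <;> simp_all
          | fls => simp [val] at hvv
          | neg φ => simp [PForm.IsBasic] at hb
          | conj φ ψ => simp [PForm.IsBasic] at hb
          | imp φ ψ => simp [PForm.IsBasic] at hb
        · have hb := hc φ (by simp only [Finset.mem_union]; tauto)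
          cases φ with
          | atom p =>
              simp only [val, hIdef] at hvv
              split_ifs at hvv with h1 h2
              exact hk _ h1 h2 hm
          | fls => simp [val] at hvv
          | neg φ => simp [PForm.IsBasic] at hb
          | conj φ ψ => simp [PForm.IsBasic] at hb
          | imp φ ψ => simp [PForm.IsBasic] at hb
      obtain ⟨φ, h1, h2, h3⟩ := key
      have := SP.ax (Γ₁.erase φ) (Γ₂.erase φ) (Γ₃.erase φ) φ
      rwa [Finset.insert_erase h1, Finset.insert_erase h2, Finset.insert_erase h3] at this

section Vlemmas
variable {x y : V3}
lemma negv_ne_f (h : x.negv ≠ .f) : x ≠ .t := by cases x <;> simp_all [V3.negv]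
lemma negv_ne_b (h : x.negv ≠ .b) : x ≠ .b := by cases x <;> simp_all [V3.negv]
lemma negv_ne_t (h : x.negv ≠ .t) : x ≠ .f := by cases x <;> simp_all [V3.negv]
lemma conjv_ne_f (h : x.conjv y ≠ .f) : x ≠ .f ∧ y ≠ .f := by
  cases x <;> cases y <;> simp_all [V3.conjv]
lemma conjv_ne_b (h : x.conjv y ≠ .b) : (x ≠ .b ∧ y ≠ .b) ∨ x = .f ∨ y = .f := by
  cases x <;> cases y <;> simp_all [V3.conjv]
lemma conjv_ne_t (h : x.conjv y ≠ .t) : x ≠ .t ∨ y ≠ .t := by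
  cases x <;> cases y <;> simp_all [V3.conjv]
lemma impv_ne_f (h : x.impv y ≠ .f) : (x ≠ .b ∧ x ≠ .t) ∨ y ≠ .f := by
  cases x <;> cases y <;> simp_all [V3.impv]
lemma impv_ne_b (h : x.impv y ≠ .b) : (x ≠ .b ∧ x ≠ .t) ∨ y ≠ .b := by
  cases x <;> cases y <;> simp_all [V3.impv]
lemma impv_ne_t (h : x.impv y ≠ .t) : x ≠ .f ∧ y ≠ .t := by
  cases x <;> cases y <;> simp_all [V3.impv]
end Vlemmas

lemma RP_complete {Γ₁ Γ₂ Γ₃ : Finset PForm} (hr : PAntiRefutable Γ₁ Γ₂ Γ₃) :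
    RP Γ₁ Γ₂ Γ₃ := by
  classical
  suffices H : ∀ n Γ₁ Γ₂ Γ₃, fw Γ₁ + fw Γ₂ + fw Γ₃ ≤ n → PAntiRefutable Γ₁ Γ₂ Γ₃ →
      RP Γ₁ Γ₂ Γ₃ from H _ _ _ _ le_rfl hr
  intro n
  induction n using Nat.strong_induction_on with
  | _ n ih =>
  intro Γ₁ Γ₂ Γ₃ hn href
  obtain ⟨I, hI⟩ := href
  by_cases hc : ∃ χ ∈ Γ₁ ∪ Γ₂ ∪ Γ₃, ¬ χ.IsBasic
  · obtain ⟨χ, hmem, hnb⟩ := hc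
    rw [Finset.mem_union, Finset.mem_union] at hmem
    rcases hmem with (hm | hm) | hm
    · -- non-basic formula in the f-component
      have hΓ : Γ₁ = insert χ (Γ₁.erase χ) := (Finset.insert_erase hm).symm
      rw [hΓ] at hI ⊢; clear hΓ
      rw [PAnti_insert₁] at hI
      obtain ⟨hv, hrest⟩ := hI
      cases χ with
      | atom p => simp [PForm.IsBasic] at hnb
      | fls => simp [PForm.IsBasic] at hnb
      | neg φ =>
          simp only [val] at hv
          apply RP.negF
          refine ih _ ?_ _ _ _ le_rfl ⟨I, ?_⟩
          · have e1 := fw_insert_le φ Γ₃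
            have e3 := fw_erase hm
            have ew : (PForm.neg φ).wt = φ.wt + 1 := rfl
            omega
          · rw [PAnti_insert₃]
            exact ⟨negv_ne_f hv, hrest⟩
      | conj φ ψ =>
          simp only [val] at hv
          apply RP.conjF
          refine ih _ ?_ _ _ _ le_rfl ⟨I, ?_⟩
          · have e1 := fw_insert_le φ (insert ψ (Γ₁.erase (PForm.conj φ ψ)))
            have e2 := fw_insert_le ψ (Γ₁.erase (PForm.conj φ ψ))
            have e3 := fw_erase hm
            have ew : (PForm.conj φ ψ).wt = 2 * (φ.wt + ψ.wt) + 1 := rfl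
            omega
          · rw [PAnti_insert₁, PAnti_insert₁]
            exact ⟨(conjv_ne_f hv).1, (conjv_ne_f hv).2, hrest⟩
      | imp φ ψ =>
          simp only [val] at hv
          rcases impv_ne_f hv with ⟨hb, ht⟩ | hy
          · apply RP.impF1
            refine ih _ ?_ _ _ _ le_rfl ⟨I, ?_⟩
            · have e1 := fw_insert_le φ Γ₂
              have e2 := fw_insert_le φ Γ₃
              have e3 := fw_erase hm
              have ew : (PForm.imp φ ψ).wt = 2 * (φ.wt + ψ.wt) + 1 := rfl
              omega
            · rw [PAnti_insert₂, PAnti_insert₃]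
              exact ⟨hb, ht, hrest⟩
          · apply RP.impF2
            refine ih _ ?_ _ _ _ le_rfl ⟨I, ?_⟩
            · have e1 := fw_insert_le ψ (Γ₁.erase (PForm.imp φ ψ))
              have e3 := fw_erase hm
              have ew : (PForm.imp φ ψ).wt = 2 * (φ.wt + ψ.wt) + 1 := rfl
              omega
            · rw [PAnti_insert₁]
              exact ⟨hy, hrest⟩
    · -- non-basic formula in the b-component
      have hΓ : Γ₂ = insert χ (Γ₂.erase χ) := (Finset.insert_erase hm).symm
      rw [hΓ] at hI ⊢; clear hΓ
      rw [PAnti_insert₂] at hI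
      obtain ⟨hv, hrest⟩ := hI
      cases χ with
      | atom p => simp [PForm.IsBasic] at hnb
      | fls => simp [PForm.IsBasic] at hnb
      | neg φ =>
          simp only [val] at hv
          apply RP.negB
          refine ih _ ?_ _ _ _ le_rfl ⟨I, ?_⟩
          · have e1 := fw_insert_le φ (Γ₂.erase (PForm.neg φ))
            have e3 := fw_erase hm
            have ew : (PForm.neg φ).wt = φ.wt + 1 := rfl
            omega
          · rw [PAnti_insert₂]
            exact ⟨negv_ne_b hv, hrest⟩
      | conj φ ψ =>
          simp only [val] at hv
          rcases conjv_ne_b hv with ⟨hx, hy⟩ | hx | hy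
          · apply RP.conjB1
            refine ih _ ?_ _ _ _ le_rfl ⟨I, ?_⟩
            · have e1 := fw_insert_le φ (insert ψ (Γ₂.erase (PForm.conj φ ψ)))
              have e2 := fw_insert_le ψ (Γ₂.erase (PForm.conj φ ψ))
              have e3 := fw_erase hm
              have ew : (PForm.conj φ ψ).wt = 2 * (φ.wt + ψ.wt) + 1 := rfl
              omega
            · rw [PAnti_insert₂, PAnti_insert₂]
              exact ⟨hx, hy, hrest⟩
          · apply RP.conjB2
            refine ih _ ?_ _ _ _ le_rfl ⟨I, ?_⟩
            · have e1 := fw_insert_le φ (Γ₂.erase (PForm.conj φ ψ))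
              have e2 := fw_insert_le φ Γ₃
              have e3 := fw_erase hm
              have ew : (PForm.conj φ ψ).wt = 2 * (φ.wt + ψ.wt) + 1 := rfl
              omega
            · rw [PAnti_insert₂, PAnti_insert₃]
              exact ⟨by simp [hx], by simp [hx], hrest⟩
          · apply RP.conjB3
            refine ih _ ?_ _ _ _ le_rfl ⟨I, ?_⟩
            · have e1 := fw_insert_le ψ (Γ₂.erase (PForm.conj φ ψ))
              have e2 := fw_insert_le ψ Γ₃
              have e3 := fw_erase hm
              have ew : (PForm.conj φ ψ).wt = 2 * (φ.wt + ψ.wt) + 1 := rfl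
              omega
            · rw [PAnti_insert₂, PAnti_insert₃]
              exact ⟨by simp [hy], by simp [hy], hrest⟩
      | imp φ ψ =>
          simp only [val] at hv
          rcases impv_ne_b hv with ⟨hb, ht⟩ | hy
          · apply RP.impB1
            refine ih _ ?_ _ _ _ le_rfl ⟨I, ?_⟩
            · have e1 := fw_insert_le φ (Γ₂.erase (PForm.imp φ ψ))
              have e2 := fw_insert_le φ Γ₃
              have e3 := fw_erase hm
              have ew : (PForm.imp φ ψ).wt = 2 * (φ.wt + ψ.wt) + 1 := rfl
              omega
            · rw [PAnti_insert₂, PAnti_insert₃]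
              exact ⟨hb, ht, hrest⟩
          · apply RP.impB2
            refine ih _ ?_ _ _ _ le_rfl ⟨I, ?_⟩
            · have e1 := fw_insert_le ψ (Γ₂.erase (PForm.imp φ ψ))
              have e3 := fw_erase hm
              have ew : (PForm.imp φ ψ).wt = 2 * (φ.wt + ψ.wt) + 1 := rfl
              omega
            · rw [PAnti_insert₂]
              exact ⟨hy, hrest⟩
    · -- non-basic formula in the t-component
      have hΓ : Γ₃ = insert χ (Γ₃.erase χ) := (Finset.insert_erase hm).symm
      rw [hΓ] at hI ⊢; clear hΓ
      rw [PAnti_insert₃] at hI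
      obtain ⟨hv, hrest⟩ := hI
      cases χ with
      | atom p => simp [PForm.IsBasic] at hnb
      | fls => simp [PForm.IsBasic] at hnb
      | neg φ =>
          simp only [val] at hv
          apply RP.negT
          refine ih _ ?_ _ _ _ le_rfl ⟨I, ?_⟩
          · have e1 := fw_insert_le φ Γ₁
            have e3 := fw_erase hm
            have ew : (PForm.neg φ).wt = φ.wt + 1 := rfl
            omega
          · rw [PAnti_insert₁]
            exact ⟨negv_ne_t hv, hrest⟩
      | conj φ ψ =>
          simp only [val] at hv
          rcases conjv_ne_t hv with hx | hy
          · apply RP.conjT1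
            refine ih _ ?_ _ _ _ le_rfl ⟨I, ?_⟩
            · have e1 := fw_insert_le φ (Γ₃.erase (PForm.conj φ ψ))
              have e3 := fw_erase hm
              have ew : (PForm.conj φ ψ).wt = 2 * (φ.wt + ψ.wt) + 1 := rfl
              omega
            · rw [PAnti_insert₃]
              exact ⟨hx, hrest⟩
          · apply RP.conjT2
            refine ih _ ?_ _ _ _ le_rfl ⟨I, ?_⟩
            · have e1 := fw_insert_le ψ (Γ₃.erase (PForm.conj φ ψ))
              have e3 := fw_erase hm
              have ew : (PForm.conj φ ψ).wt = 2 * (φ.wt + ψ.wt) + 1 := rfl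
              omega
            · rw [PAnti_insert₃]
              exact ⟨hy, hrest⟩
      | imp φ ψ =>
          simp only [val] at hv
          apply RP.impT
          refine ih _ ?_ _ _ _ le_rfl ⟨I, ?_⟩
          · have e1 := fw_insert_le φ Γ₁
            have e2 := fw_insert_le ψ (Γ₃.erase (PForm.imp φ ψ))
            have e3 := fw_erase hm
            have ew : (PForm.imp φ ψ).wt = 2 * (φ.wt + ψ.wt) + 1 := rfl
            omega
          · rw [PAnti_insert₁, PAnti_insert₃]
            exact ⟨(impv_ne_t hv).1, (impv_ne_t hv).2, hrest⟩
  · -- all basic: apply the axiom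
    push_neg at hc
    obtain ⟨h1, h2, h3⟩ := hI
    apply RP.ax
    · exact hc
    · rw [Finset.eq_empty_iff_forall_notMem]
      intro φ hmem
      rw [Finset.mem_inter, Finset.mem_inter] at hmem
      obtain ⟨⟨m1, m2⟩, m3⟩ := hmem
      have := h1 φ m1
      have := h2 φ m2
      have := h3 φ m3
      rcases (φ.val I).cases3 with h | h | h <;> tauto
    · intro hF
      exact h1 _ hF rfl

/-- Semantic reading of an `ME_P`-sequent, used for soundness. -/
def Sem (S : Finset ℕ) (Γ : Finset PForm) (Pi : Finset ℕ) (Δ : Finset PForm)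
    (Θ : Finset ℕ) : Prop :=
  ∀ I : ℕ → V3, PForm.IsModelSet I ↑Γ → (∀ q ∈ S, I q = .b) → (∀ q ∈ Pi, I q ≠ .b) →
    (∀ J : ℕ → V3, PForm.IsModelSet J ↑Γ → (∀ q ∈ Pi, J q ≠ .b) →
      ¬ ({p : ℕ | p ∈ S ∪ Pi ∪ Θ ∧ J p = .b} ⊂ {p : ℕ | p ∈ S ∪ Pi ∪ Θ ∧ I p = .b})) →
    ∃ δ ∈ Δ, PForm.IsModel I δ

lemma MEP_sound {S : Finset ℕ} {Γ : Finset PForm} {Pi : Finset ℕ} {Δ : Finset PForm}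
    {Θ : Finset ℕ} (h : MEP S Γ Pi Δ Θ) : Sem S Γ Pi Δ Θ := by
  induction h with
  | @m1 S Pi Θ Γ Δ q hRP =>
      intro I hmod hS hPi hmin
      exfalso
      obtain ⟨J, hJ1, hJ2, _⟩ := RP_sound hRP
      have hJmod : PForm.IsModelSet J ↑Γ := by
        intro φ hφ
        exact isModel_iff.mpr (hJ1 φ (Finset.mem_coe.mp hφ))
      have hJnb : ∀ p, p ∈ insert q (Θ ∪ Pi) → J p ≠ .b := by
        intro p hp
        exact hJ2 (PForm.atom p) (Finset.mem_image_of_mem _ hp)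
      apply hmin J hJmod (fun r hr => hJnb r (by simp [Finset.mem_insert, Finset.mem_union, hr]))
      rw [Set.ssubset_def]
      constructor
      · rintro p ⟨hpW, hpb⟩
        refine ⟨hpW, ?_⟩
        have hpS : p ∈ S := by
          have h1 : p ∉ insert q (Θ ∪ Pi) := fun hc => hJnb p hc hpb
          simp only [Finset.mem_insert, Finset.mem_union, not_or] at h1
          simp only [Finset.mem_union, Finset.mem_insert] at hpW
          tauto
        exact hS p (Finset.mem_insert_of_mem hpS)
      · intro hsup
        have hqmem : q ∈ {p : ℕ | p ∈ insert q S ∪ Pi ∪ Θ ∧ I p = .b} :=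
          ⟨by simp, hS q (Finset.mem_insert_self _ _)⟩
        have := (hsup hqmem).2
        exact hJnb q (by simp) this
  | @m2 S Pi Θ Γ Δ hSP =>
      intro I hmod hS hPi _
      rcases SP_sound hSP I with ⟨φ, hφm, hφv⟩ | ⟨φ, hφm, hφv⟩ | ⟨φ, hφm, hφv⟩
      · exfalso
        rcases Finset.mem_union.mp hφm with hm | hm
        · obtain ⟨p, hp, rfl⟩ := Finset.mem_image.mp hm
          have := hS p hp
          simp [val] at hφv
          rw [this] at hφv; cases hφv
        · have := isModel_iff.mp (hmod φ (Finset.mem_coe.mpr hm))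
          exact this hφv
      · rcases Finset.mem_union.mp hφm with hm | hm
        · exact ⟨φ, hm, Or.inl hφv⟩
        · exfalso
          obtain ⟨p, hp, rfl⟩ := Finset.mem_image.mp hm
          simp [val] at hφv
          exact hPi p hp hφv
      · rcases Finset.mem_union.mp hφm with hm | hm
        · exact ⟨φ, hm, Or.inr hφv⟩
        · exfalso
          obtain ⟨p, hp, rfl⟩ := Finset.mem_image.mp hm
          simp [val] at hφv
          rw [hS p hp] at hφv; cases hφv
  | @m3 S Pi Θ Γ Δ q _ _ ih1 ih2 =>
      intro I hmod hS hPi hmin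
      have hW1 : ∀ K : ℕ → V3,
          {p : ℕ | p ∈ insert q S ∪ Pi ∪ Θ ∧ K p = .b} =
          {p : ℕ | p ∈ S ∪ Pi ∪ insert q Θ ∧ K p = .b} := by
        intro K; ext p
        simp only [Set.mem_setOf_eq, Finset.mem_union, Finset.mem_insert]
        tauto
      have hW2 : ∀ K : ℕ → V3,
          {p : ℕ | p ∈ S ∪ insert q Pi ∪ Θ ∧ K p = .b} =
          {p : ℕ | p ∈ S ∪ Pi ∪ insert q Θ ∧ K p = .b} := by
        intro K; ext p
        simp only [Set.mem_setOf_eq, Finset.mem_union, Finset.mem_insert]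
        rcases eq_or_ne p q with rfl | hpq
        · simp
        · tauto
      by_cases hq : I q = .b
      · apply ih1 I hmod ?_ hPi
        · intro J hJmod hJPi hss
          apply hmin J hJmod hJPi
          rwa [hW1 J, hW1 I] at hss
        · intro r hr
          rcases Finset.mem_insert.mp hr with rfl | hr
          · exact hq
          · exact hS r hr
      · apply ih2 I hmod hS ?_
        · intro J hJmod hJPi hss
          apply hmin J hJmod (fun r hr => hJPi r (Finset.mem_insert_of_mem hr))
          rwa [hW2 J, hW2 I] at hss
        · intro r hr
          rcases Finset.mem_insert.mp hr with rfl | hr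
          · exact hq
          · exact hPi r hr

lemma pvars_subset_var {Γ Δ : Finset PForm} {φ : PForm} (h : φ ∈ Γ) :
    φ.pvars ⊆ (Γ ∪ Δ).biUnion PForm.pvars := fun p hp =>
  Finset.mem_biUnion.mpr ⟨φ, Finset.mem_union_left _ h, hp⟩

lemma MEP_backward {Γ Δ : Finset PForm}
    (h : MEP ∅ Γ ∅ Δ ((Γ ∪ Δ).biUnion PForm.pvars)) :
    PMinEntails (Γ : Set PForm) (Δ : Set PForm) := by
  classical
  intro I hI
  obtain ⟨hImod, hImin⟩ := hI
  have hsem := MEP_sound h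
  have hminarg : ∀ J : ℕ → V3, PForm.IsModelSet J ↑Γ → (∀ q ∈ (∅ : Finset ℕ), J q ≠ .b) →
      ¬ ({p : ℕ | p ∈ (∅ : Finset ℕ) ∪ (∅ : Finset ℕ) ∪ (Γ ∪ Δ).biUnion PForm.pvars ∧ J p = .b}
        ⊂ {p : ℕ | p ∈ (∅ : Finset ℕ) ∪ (∅ : Finset ℕ) ∪ (Γ ∪ Δ).biUnion PForm.pvars ∧ I p = .b}) := by
    intro J hJmod _ hss
    apply hImin
    obtain ⟨p0, hp0I, hp0J⟩ := Set.exists_of_ssubset hss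
    rw [Set.mem_setOf_eq] at hp0I
    have hJp0 : J p0 ≠ .b := fun hb => hp0J ⟨hp0I.1, hb⟩
    set K : ℕ → V3 := fun p => if p ∈ Γ.biUnion PForm.pvars then J p else .t with hKdef
    have hKmod : PForm.IsModelSet K ↑Γ := by
      intro φ hφ
      have hv : φ.val K = φ.val J := by
        apply val_congr
        intro p hp
        simp only [hKdef]
        rw [if_pos (Finset.mem_biUnion.mpr ⟨φ, Finset.mem_coe.mp hφ, hp⟩)]
      unfold PForm.IsModel
      rw [hv]
      exact hJmod φ hφ
    have hKne : K p0 ≠ .b := by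
      simp only [hKdef]
      by_cases hpV : p0 ∈ Γ.biUnion PForm.pvars
      · rw [if_pos hpV]; exact hJp0
      · rw [if_neg hpV]; simp
    have hKsub : {p : ℕ | K p = .b} ⊆ {p : ℕ | I p = .b} := by
      intro p hp
      rw [Set.mem_setOf_eq] at hp ⊢
      simp only [hKdef] at hp
      by_cases hpV : p ∈ Γ.biUnion PForm.pvars
      · rw [if_pos hpV] at hp
        have hpW : p ∈ (∅ : Finset ℕ) ∪ (∅ : Finset ℕ) ∪ (Γ ∪ Δ).biUnion PForm.pvars := by
          obtain ⟨φ, hφ, hpφ⟩ := Finset.mem_biUnion.mp hpV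
          simp only [Finset.mem_union]
          exact Or.inr (Finset.mem_biUnion.mpr ⟨φ, Finset.mem_union_left _ hφ, hpφ⟩)
        exact (hss.1 ⟨hpW, hp⟩).2
      · rw [if_neg hpV] at hp; cases hp
    refine ⟨K, hKmod, ?_⟩
    rw [Set.ssubset_def]
    exact ⟨hKsub, fun hsup => hKne (hsup (show I p0 = .b from hp0I.2))⟩
  obtain ⟨δ, hδ, hδm⟩ := hsem I hImod (by simp) (by simp) hminarg
  exact ⟨δ, Finset.mem_coe.mpr hδ, hδm⟩

lemma MEP_forward {Γ Δ : Finset PForm} (h : PMinEntails (Γ : Set PForm) (Δ : Set PForm)) :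
    MEP ∅ Γ ∅ Δ ((Γ ∪ Δ).biUnion PForm.pvars) := by
  classical
  set Θ₀ := (Γ ∪ Δ).biUnion PForm.pvars with hΘ₀def
  have main : ∀ Θ : Finset ℕ, Θ ⊆ Θ₀ → ∀ S Pi : Finset ℕ, Pi ⊆ Θ₀ →
      Θ₀ ⊆ S ∪ Pi ∪ Θ → MEP S Γ Pi Δ Θ := by
    intro Θ
    induction Θ using Finset.induction_on with
    | empty =>
        intro _ S Pi hPisub hcov
        by_cases hA : ∃ q ∈ S, ∃ J : ℕ → V3, PForm.IsModelSet J ↑Γ ∧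
            J q ≠ .b ∧ ∀ p ∈ Pi, J p ≠ .b
        · obtain ⟨q, hq, J, hJmod, hJq, hJPi⟩ := hA
          have hrp : RP Γ ((insert q ((∅ : Finset ℕ) ∪ Pi)).image PForm.atom) ∅ := by
            apply RP_complete
            refine ⟨J, ?_, ?_, by simp⟩
            · intro φ hφ
              exact isModel_iff.mp (hJmod φ (Finset.mem_coe.mpr hφ))
            · intro φ hφ
              obtain ⟨p, hp, rfl⟩ := Finset.mem_image.mp hφ
              simp only [Finset.empty_union, Finset.mem_insert] at hp
              show (PForm.atom p).val J ≠ .b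
              rcases hp with rfl | hp
              · exact hJq
              · exact hJPi p hp
          have := MEP.m1 (S := S) (Δ := Δ) hrp
          rwa [Finset.insert_eq_self.mpr hq] at this
        · apply MEP.m2
          apply SP_complete
          intro I
          by_contra hI
          unfold PSeqTrue at hI
          push_neg at hI
          obtain ⟨h1, h2, h3⟩ := hI
          have hSb : ∀ q ∈ S, I q = .b := by
            intro q hqS
            have hf := h1 (.atom q) (Finset.mem_union_left _ (Finset.mem_image_of_mem _ hqS))
            have ht := h3 (.atom q) (Finset.mem_union_right _ (Finset.mem_image_of_mem _ hqS))
            simp only [val] at hf ht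
            rcases (I q).cases3 with hc | hc | hc <;> tauto
          have hGm : PForm.IsModelSet I ↑Γ := by
            intro φ hφ
            exact isModel_iff.mpr (h1 φ (Finset.mem_union_right _ (Finset.mem_coe.mp hφ)))
          have hPin : ∀ p ∈ Pi, I p ≠ .b := by
            intro p hp
            have := h2 (.atom p) (Finset.mem_union_right _ (Finset.mem_image_of_mem _ hp))
            simpa [val] using this
          have hDn : ∀ δ ∈ Δ, ¬ PForm.IsModel I δ := by
            intro δ hδ hdm
            rcases hdm with hb | ht
            · exact h2 δ (Finset.mem_union_left _ hδ) hb
            · exact h3 δ (Finset.mem_union_left _ hδ) ht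
          set I' : ℕ → V3 := fun p => if p ∈ Θ₀ then I p else .t with hI'def
          have hagree : ∀ φ : PForm, φ ∈ Γ ∪ Δ → φ.val I' = φ.val I := by
            intro φ hφ
            apply val_congr
            intro p hp
            simp only [hI'def]
            rw [if_pos (Finset.mem_biUnion.mpr ⟨φ, hφ, hp⟩)]
          have hI'mod : PForm.IsModelSet I' ↑Γ := by
            intro φ hφ
            unfold PForm.IsModel
            rw [hagree φ (Finset.mem_union_left _ (Finset.mem_coe.mp hφ))]
            exact hGm φ hφ
          have hI'b : ∀ p, I' p = .b → p ∈ S ∧ I p = .b := by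
            intro p hpb
            by_cases hpΘ : p ∈ Θ₀
            · simp only [hI'def] at hpb
              rw [if_pos hpΘ] at hpb
              have hmem := hcov hpΘ
              simp only [Finset.union_empty, Finset.mem_union] at hmem
              rcases hmem with hmem | hmem
              · exact ⟨hmem, hpb⟩
              · exact absurd hpb (hPin p hmem)
            · simp only [hI'def] at hpb
              rw [if_neg hpΘ] at hpb
              cases hpb
          have hmin : PMinIncModel I' ↑Γ := by
            refine ⟨hI'mod, ?_⟩
            rintro ⟨K, hKmod, hKss⟩
            obtain ⟨q0, hq0I, hq0K⟩ := Set.exists_of_ssubset hKss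
            rw [Set.mem_setOf_eq] at hq0I
            have hq0Kne : K q0 ≠ .b := fun hb => hq0K hb
            apply hA
            refine ⟨q0, (hI'b q0 hq0I).1, K, hKmod, hq0Kne, ?_⟩
            intro p hp hKb
            have hpI' : I' p = .b := hKss.1 hKb
            exact hPin p hp (hI'b p hpI').2
          obtain ⟨δ, hδ, hδm⟩ := h I' hmin
          apply hDn δ (Finset.mem_coe.mp hδ)
          unfold PForm.IsModel at hδm ⊢
          rwa [hagree δ (Finset.mem_union_right _ (Finset.mem_coe.mp hδ))] at hδm
    | @insert q Θ' hqΘ ihΘ =>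
        intro hsub S Pi hPisub hcov
        have hqΘ₀ : q ∈ Θ₀ := hsub (Finset.mem_insert_self _ _)
        apply MEP.m3
        · apply ihΘ (fun p hp => hsub (Finset.mem_insert_of_mem hp)) (insert q S) Pi hPisub
          intro p hp
          have hc := hcov hp
          simp only [Finset.mem_union, Finset.mem_insert] at hc ⊢
          tauto
        · apply ihΘ (fun p hp => hsub (Finset.mem_insert_of_mem hp)) S (insert q Pi)
            (Finset.insert_subset hqΘ₀ hPisub)
          intro p hp
          have hc := hcov hp
          simp only [Finset.mem_union, Finset.mem_insert] at hc ⊢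
          tauto
  exact main Θ₀ subset_rfl ∅ ∅ (Finset.empty_subset _) (by simp)

end Aux

/-- Adequacy of `ME_P` for three-valued minimally inconsistent entailment:
for finite P-theories `Γ` and `Δ`, `Γ ⊨ᵐ_P Δ` iff the ME_P-sequent
`∅;Γ,∅̄⇒Δ;Var(Γ∪Δ)` is provable in `ME_P`. -/
theorem MEP_adequate (Γ Δ : Finset PForm) :
    PMinEntails (Γ : Set PForm) (Δ : Set PForm) ↔
      MEP ∅ Γ ∅ Δ ((Γ ∪ Δ).biUnion PForm.pvars) :=
  ⟨MEP_forward, MEP_backward⟩
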